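/- Let μ₁ > μ₂ > 0 and p > 2 be real numbers and let β satisfy 0 < β ≤ (p−1)μ₂. Define f(τ) = (1+τ²)/(μ₁ + 2βτ^p + μ₂τ^{2p})^{1/p} for τ ≥ 0. Then there exists τ₀ > 1 such that f is strictly increasing on [0, τ₀] and strictly decreasing on [τ₀, +∞); consequently τ₀ is the unique maximum point of f on [0, +∞), and f(τ) > f(0) = μ₁^{−1/p} for every τ > 0, so 0 is the unique minimum point of f on [0, +∞). -/

import Mathlib

section FShapeAux
open Real Set


lemma key_ineq {p : ℝ} (hp : 2 < p) {τ : ℝ} (hτ : 0 < τ) (hτ1 : τ ≠ 1) :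
    p * τ ^ 2 - (p - 2) < 2 * τ ^ p := by
  have hs : (-1:ℝ) ≤ τ ^ 2 - 1 := by nlinarith [sq_nonneg τ]
  have hs' : τ ^ 2 - 1 ≠ 0 := by
    intro h
    have h1 : (τ - 1) * (τ + 1) = 0 := by linear_combination h
    rcases mul_eq_zero.1 h1 with h2 | h2
    · exact hτ1 (by linarith)
    · linarith
  have hb := one_add_mul_self_lt_rpow_one_add hs hs' (by linarith : (1:ℝ) < p/2)
  have h2 : (1 + (τ^2 - 1)) ^ (p/2) = τ ^ p := by
    have e1 : (1 + (τ^2 - 1)) = τ ^ ((2:ℕ):ℝ) := by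
      rw [Real.rpow_natCast]; ring
    rw [e1, ← Real.rpow_mul hτ.le]
    congr 1
    push_cast
    ring
  rw [h2] at hb
  nlinarith [hb]

-- reduction identities for τ > 0
lemma red1 {τ : ℝ} (hτ : 0 < τ) (p : ℝ) : τ ^ (p - 1) = τ ^ p / τ := by
  rw [Real.rpow_sub hτ, Real.rpow_one]

lemma red2 {τ : ℝ} (hτ : 0 < τ) (p : ℝ) : τ ^ (p - 2) = τ ^ p / τ ^ 2 := by
  rw [Real.rpow_sub hτ, show ((2:ℝ)) = ((2:ℕ):ℝ) by norm_num, Real.rpow_natCast]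

lemma red3 {τ : ℝ} (hτ : 0 < τ) (p : ℝ) : τ ^ (p - 3) = τ ^ p / τ ^ 3 := by
  rw [Real.rpow_sub hτ, show ((3:ℝ)) = ((3:ℕ):ℝ) by norm_num, Real.rpow_natCast]

lemma red2p {τ : ℝ} (hτ : 0 ≤ τ) (p : ℝ) : τ ^ (2*p) = (τ ^ p) ^ 2 := by
  rw [mul_comm, Real.rpow_mul hτ, show ((2:ℝ)) = ((2:ℕ):ℝ) by norm_num, Real.rpow_natCast]
lemma hasDerivAt_phi (p μ₁ μ₂ β : ℝ) {τ : ℝ} (hτ : 0 < τ) :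
    HasDerivAt (fun τ : ℝ => μ₁ + β*τ^p - β*τ^(p-2) - μ₂*τ^(2*p-2))
      (β*(p*τ^(p-1)) - β*((p-2)*τ^(p-3)) - μ₂*((2*p-2)*τ^(2*p-3))) τ := by
  have h1 := Real.hasDerivAt_rpow_const (x := τ) (p := p) (Or.inl hτ.ne')
  have h2 := Real.hasDerivAt_rpow_const (x := τ) (p := p-2) (Or.inl hτ.ne')
  have h3 := Real.hasDerivAt_rpow_const (x := τ) (p := 2*p-2) (Or.inl hτ.ne')
  have := (((h1.const_mul β).const_add μ₁).sub (h2.const_mul β)).sub (h3.const_mul μ₂)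
  refine this.congr_deriv ?_
  ring_nf
lemma phi_deriv_neg (p μ₁ μ₂ β : ℝ) (hμ₂ : 0 < μ₂) (hp : 2 < p) (hβ0 : 0 < β)
    (hβ : β ≤ (p - 1) * μ₂) {τ : ℝ} (hτ : 1 < τ) :
    β*(p*τ^(p-1)) - β*((p-2)*τ^(p-3)) - μ₂*((2*p-2)*τ^(2*p-3)) < 0 := by
  have hτ0 : 0 < τ := by linarith
  have ht : 0 < τ ^ p := Real.rpow_pos_of_pos hτ0 p
  have e23 : τ ^ (2*p-3) = (τ^p)^2 / τ^3 := by
    rw [show 2*p-3 = 2*p - (3:ℝ) by ring, Real.rpow_sub hτ0, red2p hτ0.le,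
      show ((3:ℝ)) = ((3:ℕ):ℝ) by norm_num, Real.rpow_natCast]
  rw [red1 hτ0, red3 hτ0, e23]
  rw [show β*(p*(τ^p/τ)) - β*((p-2)*(τ^p/τ^3)) - μ₂*((2*p-2)*((τ^p)^2/τ^3))
      = (β*p*(τ^p)*τ^2 - β*(p-2)*(τ^p) - μ₂*(2*p-2)*(τ^p)^2) / τ^3 by
    field_simp]
  apply div_neg_of_neg_of_pos _ (by positivity)
  have hkey := key_ineq hp hτ0 (by linarith : τ ≠ 1)
  nlinarith [mul_lt_mul_of_pos_right (mul_lt_mul_of_pos_left hkey hβ0) ht,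
    mul_nonneg (mul_nonneg (by linarith : (0:ℝ) ≤ (2*p-2)*μ₂ - 2*β) ht.le) ht.le]

lemma phi_strictAntiOn (p μ₁ μ₂ β : ℝ) (hμ₂ : 0 < μ₂) (hp : 2 < p) (hβ0 : 0 < β)
    (hβ : β ≤ (p - 1) * μ₂) :
    StrictAntiOn (fun τ : ℝ => μ₁ + β*τ^p - β*τ^(p-2) - μ₂*τ^(2*p-2)) (Ici 1) := by
  apply strictAntiOn_of_deriv_neg (convex_Ici 1)
  · intro τ hτ
    exact (hasDerivAt_phi p μ₁ μ₂ β (by simp at hτ; linarith)).continuousAt.continuousWithinAt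
  · intro τ hτ
    rw [interior_Ici] at hτ
    rw [(hasDerivAt_phi p μ₁ μ₂ β (by linarith [mem_Ioi.1 hτ] : (0:ℝ) < τ)).deriv]
    exact phi_deriv_neg p μ₁ μ₂ β hμ₂ hp hβ0 hβ hτ
lemma hasDerivAt_G (p : ℝ) {τ : ℝ} (hτ : 0 < τ) :
    HasDerivAt (fun τ : ℝ => 1 - τ^(2*p-2) - (p-1)*τ^(p-2) + (p-1)*τ^p)
      (-((2*p-2)*τ^(2*p-3)) - (p-1)*((p-2)*τ^(p-3)) + (p-1)*(p*τ^(p-1))) τ := by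
  have h1 := Real.hasDerivAt_rpow_const (x := τ) (p := p) (Or.inl hτ.ne')
  have h2 := Real.hasDerivAt_rpow_const (x := τ) (p := p-2) (Or.inl hτ.ne')
  have h3 := Real.hasDerivAt_rpow_const (x := τ) (p := 2*p-2) (Or.inl hτ.ne')
  have := ((h3.const_sub 1).sub (h2.const_mul (p-1))).add (h1.const_mul (p-1))
  refine this.congr_deriv ?_
  ring_nf

lemma G_deriv_nonpos (p : ℝ) (hp : 2 < p) {τ : ℝ} (hτ0 : 0 < τ) (hτ1 : τ < 1) :
    -((2*p-2)*τ^(2*p-3)) - (p-1)*((p-2)*τ^(p-3)) + (p-1)*(p*τ^(p-1)) ≤ 0 := by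
  have ht : 0 < τ ^ p := Real.rpow_pos_of_pos hτ0 p
  have e23 : τ ^ (2*p-3) = (τ^p)^2 / τ^3 := by
    rw [show 2*p-3 = 2*p - (3:ℝ) by ring, Real.rpow_sub hτ0, red2p hτ0.le,
      show ((3:ℝ)) = ((3:ℕ):ℝ) by norm_num, Real.rpow_natCast]
  rw [e23, red1 hτ0, red3 hτ0]
  rw [show -((2*p-2)*((τ^p)^2/τ^3)) - (p-1)*((p-2)*(τ^p/τ^3)) + (p-1)*(p*(τ^p/τ))
      = ((p-1)*(τ^p) * (p*τ^2 - (p-2) - 2*(τ^p))) / τ^3 by field_simp; ring]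
  apply div_nonpos_of_nonpos_of_nonneg _ (by positivity)
  have hkey := key_ineq hp hτ0 (by linarith : τ ≠ 1)
  nlinarith [mul_pos (by linarith : (0:ℝ) < p - 1) ht]

lemma G_nonneg (p : ℝ) (hp : 2 < p) {τ : ℝ} (hτ0 : 0 < τ) (hτ1 : τ ≤ 1) :
    0 ≤ 1 - τ^(2*p-2) - (p-1)*τ^(p-2) + (p-1)*τ^p := by
  set G : ℝ → ℝ := fun τ => 1 - τ^(2*p-2) - (p-1)*τ^(p-2) + (p-1)*τ^p with hG
  have hG1 : G 1 = 0 := by simp [hG, Real.one_rpow]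
  have hanti : AntitoneOn G (Icc τ 1) := by
    apply antitoneOn_of_deriv_nonpos (convex_Icc τ 1)
    · intro x hx
      exact (hasDerivAt_G p (lt_of_lt_of_le hτ0 hx.1)).continuousAt.continuousWithinAt
    · intro x hx
      rw [interior_Icc] at hx
      exact (hasDerivAt_G p (hτ0.trans hx.1)).differentiableAt.differentiableWithinAt
    · intro x hx
      rw [interior_Icc] at hx
      rw [(hasDerivAt_G p (hτ0.trans hx.1)).deriv]
      exact G_deriv_nonpos p hp (hτ0.trans hx.1) hx.2
  have := hanti (left_mem_Icc.2 hτ1) (right_mem_Icc.2 hτ1) hτ1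
  rw [hG1] at this
  exact this

lemma phi_pos_unit (p μ₁ μ₂ β : ℝ) (h12 : μ₂ < μ₁) (hμ₂ : 0 < μ₂) (hp : 2 < p)
    (hβ0 : 0 < β) (hβ : β ≤ (p - 1) * μ₂) {τ : ℝ} (hτ0 : 0 < τ) (hτ1 : τ ≤ 1) :
    0 < μ₁ + β*τ^p - β*τ^(p-2) - μ₂*τ^(2*p-2) := by
  have hG := G_nonneg p hp hτ0 hτ1
  have hle : τ ^ p ≤ τ ^ (p-2) :=
    Real.rpow_le_rpow_of_exponent_ge hτ0 hτ1 (by linarith)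
  have h1 : β*(τ^(p-2) - τ^p) ≤ (p-1)*μ₂*(τ^(p-2) - τ^p) :=
    mul_le_mul_of_nonneg_right hβ (by linarith)
  have h2 : 0 ≤ μ₂*(1 - τ^(2*p-2) - (p-1)*τ^(p-2) + (p-1)*τ^p) := mul_nonneg hμ₂.le hG
  nlinarith [h1, h2]
lemma dd_pos (p μ₁ μ₂ β : ℝ) (hμ₁ : 0 < μ₁) (hμ₂ : 0 < μ₂) (hβ0 : 0 < β)
    {τ : ℝ} (hτ : 0 ≤ τ) : 0 < μ₁ + 2*β*τ^p + μ₂*τ^(2*p) := by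
  have h1 : 0 ≤ τ ^ p := Real.rpow_nonneg hτ p
  have h2 : 0 ≤ τ ^ (2*p) := Real.rpow_nonneg hτ (2*p)
  nlinarith

lemma FF_contOn (p μ₁ μ₂ β : ℝ) (hμ₁ : 0 < μ₁) (hμ₂ : 0 < μ₂) (hβ0 : 0 < β) (hp : 2 < p) :
    ContinuousOn (fun τ : ℝ => (1+τ^2) / (μ₁ + 2*β*τ^p + μ₂*τ^(2*p))^(1/p)) (Ici 0) := by
  have hp0 : (0:ℝ) < p := by linarith
  apply ContinuousOn.div
  · fun_prop
  · apply ContinuousOn.rpow_const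
    · apply ContinuousOn.add
      apply ContinuousOn.add
      · exact continuousOn_const
      · exact continuousOn_const.mul (fun x hx =>
          (Real.continuousAt_rpow_const x p (Or.inr hp0.le)).continuousWithinAt)
      · exact continuousOn_const.mul (fun x hx =>
          (Real.continuousAt_rpow_const x (2*p) (Or.inr (by linarith))).continuousWithinAt)
    · intro x hx
      exact Or.inl (dd_pos p μ₁ μ₂ β hμ₁ hμ₂ hβ0 hx).ne'
  · intro x hx
    exact (Real.rpow_pos_of_pos (dd_pos p μ₁ μ₂ β hμ₁ hμ₂ hβ0 hx) _).ne'
lemma hasDerivAt_FF (p μ₁ μ₂ β : ℝ) (hμ₁ : 0 < μ₁) (hμ₂ : 0 < μ₂) (hβ0 : 0 < β)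
    (hp : 2 < p) {τ : ℝ} (hτ : 0 < τ) :
    HasDerivAt (fun τ : ℝ => (1+τ^2) / (μ₁ + 2*β*τ^p + μ₂*τ^(2*p))^(1/p))
      ((μ₁ + 2*β*τ^p + μ₂*τ^(2*p))^(1/p-1)
        * (2*τ*(μ₁ + β*τ^p - β*τ^(p-2) - μ₂*τ^(2*p-2)))
        / ((μ₁ + 2*β*τ^p + μ₂*τ^(2*p))^(1/p))^2) τ := by
  have hp0 : (0:ℝ) < p := by linarith
  have hd : (0:ℝ) < μ₁ + 2*β*τ^p + μ₂*τ^(2*p) := dd_pos p μ₁ μ₂ β hμ₁ hμ₂ hβ0 hτ.le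
  have h1 := Real.hasDerivAt_rpow_const (x := τ) (p := p) (Or.inl hτ.ne')
  have h2 := Real.hasDerivAt_rpow_const (x := τ) (p := 2*p) (Or.inl hτ.ne')
  have hdd : HasDerivAt (fun x : ℝ => μ₁ + 2*β*x^p + μ₂*x^(2*p))
      (2*β*(p*τ^(p-1)) + μ₂*((2*p)*τ^(2*p-1))) τ :=
    ((h1.const_mul (2*β)).const_add μ₁).add (h2.const_mul μ₂)
  have hD := hdd.rpow_const (p := 1/p) (Or.inl hd.ne')
  have hD0 : (0:ℝ) < (μ₁ + 2*β*τ^p + μ₂*τ^(2*p))^(1/p) := Real.rpow_pos_of_pos hd _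
  have hn : HasDerivAt (fun x : ℝ => 1 + x^2) (2*τ) τ := by
    simpa using (hasDerivAt_pow 2 τ).const_add (1:ℝ)
  have := hn.div hD hD0.ne'
  refine this.congr_deriv ?_
  have hsplit : (μ₁ + 2*β*τ^p + μ₂*τ^(2*p))^((1:ℝ)/p)
      = (μ₁ + 2*β*τ^p + μ₂*τ^(2*p))^((1:ℝ)/p-1) * (μ₁ + 2*β*τ^p + μ₂*τ^(2*p)) := by
    have h := Real.rpow_add_one hd.ne' ((1:ℝ)/p - 1)
    rw [show (1:ℝ)/p - 1 + 1 = 1/p by ring] at h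
    exact h
  congr 1
  rw [hsplit]
  have e21 : τ ^ (2*p-1) = (τ^p)^2 / τ := by
    rw [show 2*p-1 = 2*p - (1:ℝ) by ring, Real.rpow_sub hτ, red2p hτ.le, Real.rpow_one]
  rw [e21, red1 hτ, red2 hτ,
    show τ ^ (2*p-2) = (τ^p)^2 / τ^2 by
      rw [show 2*p-2 = 2*p - (2:ℝ) by ring, Real.rpow_sub hτ, red2p hτ.le,
        show ((2:ℝ)) = ((2:ℕ):ℝ) by norm_num, Real.rpow_natCast],
    red2p hτ.le]
  field_simp
  ring
lemma FF_inv_lt (p μ₁ μ₂ β : ℝ) (h12 : μ₂ < μ₁) (hμ₂ : 0 < μ₂) (hβ0 : 0 < β)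
    (hp : 2 < p) {τ : ℝ} (hτ : 1 < τ) :
    (1+(1/τ)^2) / (μ₁ + 2*β*(1/τ)^p + μ₂*(1/τ)^(2*p))^(1/p)
      < (1+τ^2) / (μ₁ + 2*β*τ^p + μ₂*τ^(2*p))^(1/p) := by
  have hμ₁ : 0 < μ₁ := hμ₂.trans h12
  have hp0 : (0:ℝ) < p := by linarith
  have hτ0 : 0 < τ := lt_trans one_pos hτ
  have ht : 0 < τ^p := Real.rpow_pos_of_pos hτ0 p
  have ht1 : 1 < τ^p := (Real.one_lt_rpow_iff_of_pos hτ0).2 (Or.inl ⟨hτ, hp0⟩)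
  have hA : 0 < μ₁*(τ^p)^2 + 2*β*(τ^p) + μ₂ := by positivity
  have hD : 0 < μ₁ + 2*β*τ^p + μ₂*τ^(2*p) := dd_pos p μ₁ μ₂ β hμ₁ hμ₂ hβ0 hτ0.le
  have hinv : ∀ q : ℝ, (1/τ)^q = 1/τ^q := by
    intro q
    rw [one_div, one_div, Real.inv_rpow hτ0.le]
  have hbase : μ₁ + 2*β*(1/τ)^p + μ₂*(1/τ)^(2*p)
      = (μ₁*(τ^p)^2 + 2*β*(τ^p) + μ₂)/τ^(2*p) := by
    rw [hinv, hinv, red2p hτ0.le]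
    field_simp
  have hsplit : ((μ₁*(τ^p)^2 + 2*β*(τ^p) + μ₂)/τ^(2*p))^((1:ℝ)/p)
      = (μ₁*(τ^p)^2 + 2*β*(τ^p) + μ₂)^((1:ℝ)/p) / τ^2 := by
    rw [Real.div_rpow hA.le (Real.rpow_nonneg hτ0.le _), ← Real.rpow_mul hτ0.le]
    rw [show 2*p*(1/p) = ((2:ℕ):ℝ) by field_simp; norm_num, Real.rpow_natCast]
  have hval : (1+(1/τ)^2) / (μ₁ + 2*β*(1/τ)^p + μ₂*(1/τ)^(2*p))^(1/p)
      = (1+τ^2) / (μ₁*(τ^p)^2 + 2*β*(τ^p) + μ₂)^(1/p) := by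
    rw [hbase, hsplit]
    have hApow : 0 < (μ₁*(τ^p)^2 + 2*β*(τ^p) + μ₂)^((1:ℝ)/p) := Real.rpow_pos_of_pos hA _
    field_simp
    ring
  rw [hval]
  apply div_lt_div_of_pos_left (by positivity) (Real.rpow_pos_of_pos hD _)
  apply Real.rpow_lt_rpow hD.le _ (by positivity)
  rw [red2p hτ0.le]
  nlinarith [mul_pos (sub_pos.2 h12) (show (0:ℝ) < (τ^p)^2 - 1 by nlinarith)]

end FShapeAux


open Real Set in
/-- For `μ₁ > μ₂ > 0`, `p > 2`, `0 < β ≤ (p-1)μ₂`, the function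
`f(τ) = (1+τ²)/(μ₁ + 2βτ^p + μ₂τ^{2p})^{1/p}` has a unique maximum point `τ₀ > 1`
on `[0,∞)`: `f` is strictly increasing on `[0,τ₀]` and strictly decreasing on `[τ₀,∞)`,
and `0` is its unique minimum point, with `f(0) = μ₁^{-1/p} < f(τ)` for all `τ > 0`. -/
theorem f_shape_p_gt_two_beta_small (p μ₁ μ₂ β : ℝ) (h12 : μ₂ < μ₁) (hμ₂ : 0 < μ₂)
    (hp : 2 < p) (hβ0 : 0 < β) (hβ : β ≤ (p - 1) * μ₂)
    (f : ℝ → ℝ)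
    (hf : ∀ τ, 0 ≤ τ → f τ = (1 + τ ^ 2) / (μ₁ + 2 * β * τ ^ p + μ₂ * τ ^ (2 * p)) ^ (1 / p)) :
    ∃ τ₀ : ℝ, 1 < τ₀ ∧
      StrictMonoOn f (Set.Icc 0 τ₀) ∧
      StrictAntiOn f (Set.Ici τ₀) ∧
      (∀ τ, 0 ≤ τ → τ ≠ τ₀ → f τ < f τ₀) ∧
      f 0 = μ₁ ^ (-(1 / p)) ∧
      (∀ τ, 0 < τ → f 0 < f τ) := by
  have hμ₁ : 0 < μ₁ := hμ₂.trans h12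
  have hp0 : (0:ℝ) < p := by linarith
  have hφ1 : (0:ℝ) < μ₁ + β*(1:ℝ)^p - β*(1:ℝ)^(p-2) - μ₂*(1:ℝ)^(2*p-2) := by
    simp only [Real.one_rpow]; linarith
  -- a point T where φ is negative
  set C : ℝ := max 1 ((μ₁ + β + 1)/μ₂) with hC
  have hC1 : (1:ℝ) ≤ C := le_max_left _ _
  set T : ℝ := C ^ ((1:ℝ)/(p-2)) with hT
  have hT1 : (1:ℝ) ≤ T := Real.one_le_rpow hC1 (le_of_lt (one_div_pos.mpr (by linarith)))
  have hT0 : (0:ℝ) < T := by linarith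
  have hTp2 : T ^ (p-2) = C := by
    rw [hT, ← Real.rpow_mul (by linarith : (0:ℝ) ≤ C),
      one_div_mul_cancel (by linarith : p-(2:ℝ) ≠ 0), Real.rpow_one]
  have hTφ : μ₁ + β*T^p - β*T^(p-2) - μ₂*T^(2*p-2) < 0 := by
    have hTp : (1:ℝ) ≤ T ^ p := Real.one_le_rpow hT1 hp0.le
    have hsplit : T ^ (2*p-2) = T ^ p * T ^ (p-2) := by
      rw [show 2*p-2 = p + (p-2) by ring, Real.rpow_add hT0]
    have hCge : (μ₁ + β + 1)/μ₂ ≤ C := le_max_right _ _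
    have hge : μ₁ + β + 1 ≤ μ₂ * T^(p-2) := by
      rw [hTp2, ← div_le_iff₀' hμ₂]
      exact hCge
    have hTpm2 : (0:ℝ) ≤ T ^ (p-2) := Real.rpow_nonneg hT0.le _
    have hmul : (μ₁ + β + 1) * T^p ≤ μ₂ * T^(p-2) * T^p :=
      mul_le_mul_of_nonneg_right hge (by linarith)
    rw [hsplit]
    nlinarith [hTpm2, hTp]
  -- continuity of φ on [1, T]
  have hφcont : ContinuousOn (fun τ : ℝ => μ₁ + β*τ^p - β*τ^(p-2) - μ₂*τ^(2*p-2)) (Icc 1 T) :=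
    fun x hx => (hasDerivAt_phi p μ₁ μ₂ β
      (by linarith [hx.1] : (0:ℝ) < x)).continuousAt.continuousWithinAt
  -- a zero τ₀ of φ in (1, T)
  obtain ⟨τ₀, hτ₀mem, hτ₀⟩ := intermediate_value_Ioo' hT1 hφcont
    (Set.mem_Ioo.2 ⟨hTφ, hφ1⟩)
  have hτ₀1 : 1 < τ₀ := hτ₀mem.1
  have hτ₀0 : (0:ℝ) < τ₀ := by linarith
  refine ⟨τ₀, hτ₀1, ?_, ?_, ?_, ?_, ?_⟩
  all_goals {
    have hanti := phi_strictAntiOn p μ₁ μ₂ β hμ₂ hp hβ0 hβ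
    -- sign of φ
    have hφpos : ∀ τ : ℝ, 0 < τ → τ < τ₀ →
        0 < μ₁ + β*τ^p - β*τ^(p-2) - μ₂*τ^(2*p-2) := by
      intro τ hτa hτb
      rcases le_or_gt τ 1 with h1 | h1
      · exact phi_pos_unit p μ₁ μ₂ β h12 hμ₂ hp hβ0 hβ hτa h1
      · have := hanti (Set.mem_Ici.2 h1.le) (Set.mem_Ici.2 (by linarith)) hτb
        rw [hτ₀] at this
        exact this
    have hφneg : ∀ τ : ℝ, τ₀ < τ →
        μ₁ + β*τ^p - β*τ^(p-2) - μ₂*τ^(2*p-2) < 0 := by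
      intro τ hτa
      have := hanti (Set.mem_Ici.2 hτ₀1.le) (Set.mem_Ici.2 (by linarith)) hτa
      rw [hτ₀] at this
      exact this
    -- strict monotonicity of F on [0, τ₀]
    have hFmono : StrictMonoOn
        (fun τ : ℝ => (1+τ^2) / (μ₁ + 2*β*τ^p + μ₂*τ^(2*p))^(1/p)) (Icc 0 τ₀) := by
      apply strictMonoOn_of_deriv_pos (convex_Icc 0 τ₀)
      · exact (FF_contOn p μ₁ μ₂ β hμ₁ hμ₂ hβ0 hp).mono (fun x hx => hx.1)
      · intro x hx
        rw [interior_Icc] at hx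
        rw [(hasDerivAt_FF p μ₁ μ₂ β hμ₁ hμ₂ hβ0 hp hx.1).deriv]
        have hdpos := dd_pos p μ₁ μ₂ β hμ₁ hμ₂ hβ0 (le_of_lt hx.1)
        exact div_pos (mul_pos (Real.rpow_pos_of_pos hdpos _)
          (mul_pos (by linarith [hx.1]) (hφpos x hx.1 hx.2)))
          (pow_pos (Real.rpow_pos_of_pos hdpos _) 2)
    -- strict antitonicity of F on [τ₀, ∞)
    have hFanti : StrictAntiOn
        (fun τ : ℝ => (1+τ^2) / (μ₁ + 2*β*τ^p + μ₂*τ^(2*p))^(1/p)) (Ici τ₀) := by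
      apply strictAntiOn_of_deriv_neg (convex_Ici τ₀)
      · exact (FF_contOn p μ₁ μ₂ β hμ₁ hμ₂ hβ0 hp).mono
          (fun x hx => le_trans hτ₀0.le hx)
      · intro x hx
        rw [interior_Ici] at hx
        have hx0 : (0:ℝ) < x := lt_trans hτ₀0 hx
        rw [(hasDerivAt_FF p μ₁ μ₂ β hμ₁ hμ₂ hβ0 hp hx0).deriv]
        have hdpos := dd_pos p μ₁ μ₂ β hμ₁ hμ₂ hβ0 hx0.le
        exact div_neg_of_neg_of_pos (mul_neg_of_pos_of_neg (Real.rpow_pos_of_pos hdpos _)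
          (mul_neg_of_pos_of_neg (by linarith) (hφneg x hx)))
          (pow_pos (Real.rpow_pos_of_pos hdpos _) 2)
    -- transfer to f
    have hfmono : StrictMonoOn f (Icc 0 τ₀) := by
      intro x hx y hy hxy
      rw [hf x hx.1, hf y hy.1]
      exact hFmono hx hy hxy
    have hfanti : StrictAntiOn f (Ici τ₀) := by
      intro x hx y hy hxy
      rw [hf x (le_trans hτ₀0.le hx), hf y (le_trans hτ₀0.le hy)]
      exact hFanti hx hy hxy
    first
    | exact hfmono
    | exact hfanti
    | -- unique max
      { intro τ hτnn hτne
        rcases lt_or_gt_of_ne hτne with h | h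
        · exact hfmono (Set.mem_Icc.2 ⟨hτnn, h.le⟩)
            (Set.mem_Icc.2 ⟨hτ₀0.le, le_refl _⟩) h
        · exact hfanti (Set.mem_Ici.2 (le_refl _)) (Set.mem_Ici.2 h.le) h }
    | -- value at 0
      { rw [hf 0 (le_refl _)]
        rw [Real.zero_rpow hp0.ne', Real.zero_rpow (by positivity : (2*p) ≠ 0)]
        rw [Real.rpow_neg hμ₁.le]
        norm_num }
    | -- unique min
      { intro τ hτpos
        rcases le_or_gt τ τ₀ with h | h
        · exact hfmono (Set.mem_Icc.2 ⟨le_refl _, hτ₀0.le⟩)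
            (Set.mem_Icc.2 ⟨hτpos.le, h⟩) hτpos
        · have hτ1 : 1 < τ := lt_trans hτ₀1 h
          have hτ0' : (0:ℝ) < τ := by linarith
          have hinv0 : (0:ℝ) < 1/τ := by positivity
          have hinvlt : 1/τ < τ₀ := by
            have : 1/τ < 1 := by
              rw [div_lt_one hτ0']; exact hτ1
            linarith
          have step1 : f 0 < f (1/τ) :=
            hfmono (Set.mem_Icc.2 ⟨le_refl _, hτ₀0.le⟩)
              (Set.mem_Icc.2 ⟨hinv0.le, hinvlt.le⟩) hinv0
          have step2 : f (1/τ) < f τ := by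
            rw [hf (1/τ) hinv0.le, hf τ hτ0'.le]
            exact FF_inv_lt p μ₁ μ₂ β h12 hμ₂ hβ0 hp hτ1
          linarith }
  }
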